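/- Let G be a group, let A, B ⊆ G be finite subsets with B nonempty, and let C ⊆ A be a uniformly random k-element subset with 1 ≤ k ≤ |A|. Then E‖μ_C * 1_B - 1_A * 1_B‖₂² ≤ |A|²|B|/k, where μ_C := (|A|/k)·1_C and ‖f‖₂² := Σ_{x∈G} |f(x)|². -/

import Mathlib

open Finset Pointwise

section Aux
variable {G : Type*} [DecidableEq G]

lemma natineq {n m k : ℕ} (hm1 : 1 ≤ m) (hk1 : 1 ≤ k) (hmn : m ≤ n) (hkn : k ≤ n) :
    n * ((m - 1) * (k - 1)) ≤ (n - 1) * (k * m) := by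
  have hn1 : 1 ≤ n := hk1.trans hkn
  zify [hm1, hk1, hn1]
  nlinarith [mul_nonneg (sub_nonneg.2 (by exact_mod_cast hmn : (m:ℤ) ≤ n))
      (sub_nonneg.2 (by exact_mod_cast hk1 : (1:ℤ) ≤ k)),
    mul_nonneg (by positivity : (0:ℤ) ≤ (n:ℤ)) (sub_nonneg.2 (by exact_mod_cast hk1 : (1:ℤ) ≤ k))]

lemma count_one {A : Finset G} {a : G} (ha : a ∈ A) {k : ℕ} (hk : 1 ≤ k) :
    ((A.powersetCard k).filter (fun C => a ∈ C)).card = (A.card - 1).choose (k - 1) := by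
  rw [← Finset.card_erase_of_mem ha, ← Finset.card_powersetCard (k-1) (A.erase a)]
  apply Finset.card_bij' (fun C _ => C.erase a) (fun D _ => insert a D)
  · -- left_inv
    intro C hC
    simp only [mem_filter] at hC
    exact Finset.insert_erase hC.2
  · -- right_inv
    intro D hD
    rw [mem_powersetCard] at hD
    have haD : a ∉ D := fun h => (Finset.mem_erase.1 (hD.1 h)).1 rfl
    exact Finset.erase_insert haD
  · -- hi
    intro C hC
    simp only [mem_filter, mem_powersetCard] at hC
    obtain ⟨⟨hCA, hCk⟩, haC⟩ := hC
    rw [mem_powersetCard]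
    refine ⟨fun x hx => ?_, ?_⟩
    · rw [mem_erase] at hx ⊢
      exact ⟨hx.1, hCA hx.2⟩
    · rw [Finset.card_erase_of_mem haC, hCk]
  · -- hj
    intro D hD
    rw [mem_powersetCard] at hD
    obtain ⟨hDA, hDk⟩ := hD
    simp only [mem_filter, mem_powersetCard]
    have haD : a ∉ D := fun h => (Finset.mem_erase.1 (hDA h)).1 rfl
    refine ⟨⟨?_, ?_⟩, mem_insert_self _ _⟩
    · intro x hx
      rcases Finset.mem_insert.1 hx with h | h
      · exact h ▸ ha
      · exact Finset.mem_of_mem_erase (hDA h)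
    · rw [Finset.card_insert_of_notMem haD, hDk]; omega

lemma count_two {A : Finset G} {a b : G} (ha : a ∈ A) (hb : b ∈ A) (hab : a ≠ b)
    {k : ℕ} (hk : 2 ≤ k) :
    ((A.powersetCard k).filter (fun C => a ∈ C ∧ b ∈ C)).card = (A.card - 2).choose (k - 2) := by
  have h2 : ((A.erase a).erase b).card = A.card - 2 := by
    rw [Finset.card_erase_of_mem (Finset.mem_erase.2 ⟨hab.symm, hb⟩), Finset.card_erase_of_mem ha]
    omega
  rw [← h2, ← Finset.card_powersetCard (k-2) ((A.erase a).erase b)]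
  apply Finset.card_bij' (fun C _ => (C.erase a).erase b) (fun D _ => insert a (insert b D))
  · -- left_inv
    intro C hC
    simp only [mem_filter] at hC
    have haC := hC.2.1; have hbC := hC.2.2
    ext x
    simp only [Finset.mem_insert, Finset.mem_erase]
    constructor
    · rintro (rfl | rfl | ⟨-, -, h⟩) <;> assumption
    · intro hx
      by_cases h1 : x = a
      · exact Or.inl h1
      by_cases h2 : x = b
      · exact Or.inr (Or.inl h2)
      · exact Or.inr (Or.inr ⟨h2, h1, hx⟩)
  · -- right_inv
    intro D hD
    rw [mem_powersetCard] at hD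
    have haD : a ∉ D := fun h => (Finset.mem_erase.1 (Finset.mem_of_mem_erase (hD.1 h))).1 rfl
    have hbD : b ∉ D := fun h => (Finset.mem_erase.1 (hD.1 h)).1 rfl
    ext x
    simp only [Finset.mem_insert, Finset.mem_erase]
    constructor
    · rintro ⟨hxb, hxa, (rfl | rfl | h)⟩
      · exact absurd rfl hxa
      · exact absurd rfl hxb
      · exact h
    · intro hx
      exact ⟨fun h => hbD (h ▸ hx), fun h => haD (h ▸ hx), Or.inr (Or.inr hx)⟩
  · -- hi
    intro C hC
    simp only [mem_filter, mem_powersetCard] at hC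
    obtain ⟨⟨hCA, hCk⟩, haC, hbC⟩ := hC
    rw [mem_powersetCard]
    refine ⟨fun x hx => ?_, ?_⟩
    · simp only [mem_erase] at hx ⊢
      exact ⟨hx.1, hx.2.1, hCA hx.2.2⟩
    · rw [Finset.card_erase_of_mem (Finset.mem_erase.2 ⟨hab.symm, hbC⟩),
        Finset.card_erase_of_mem haC, hCk]
      omega
  · -- hj
    intro D hD
    rw [mem_powersetCard] at hD
    obtain ⟨hDA, hDk⟩ := hD
    have haD : a ∉ D := fun h => (Finset.mem_erase.1 (Finset.mem_of_mem_erase (hDA h))).1 rfl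
    have hbD : b ∉ D := fun h => (Finset.mem_erase.1 (hDA h)).1 rfl
    simp only [mem_filter, mem_powersetCard]
    refine ⟨⟨?_, ?_⟩, mem_insert_self _ _, Finset.mem_insert_of_mem (mem_insert_self _ _)⟩
    · intro x hx
      rcases Finset.mem_insert.1 hx with h | h
      · exact h ▸ ha
      rcases Finset.mem_insert.1 h with h' | h'
      · exact h' ▸ hb
      · exact Finset.mem_of_mem_erase (Finset.mem_of_mem_erase (hDA h'))
    · rw [Finset.card_insert_of_notMem, Finset.card_insert_of_notMem hbD, hDk]
      · omega
      · simp only [Finset.mem_insert]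
        push_neg
        exact ⟨hab, haD⟩

lemma key (A S : Finset G) (hS : S ⊆ A) {k : ℕ} (hk1 : 1 ≤ k) (hk2 : k ≤ A.card) :
    ∑ C ∈ A.powersetCard k,
        ((A.card : ℤ) * ((S.filter (· ∈ C)).card : ℤ) - (k : ℤ) * (S.card : ℤ)) ^ 2
      ≤ ((A.powersetCard k).card : ℤ) * A.card * S.card * k := by
  set n := A.card with hn
  set m := S.card with hm
  have hN : (A.powersetCard k).card = n.choose k := Finset.card_powersetCard k A
  set N := (A.powersetCard k).card with hNdef
  set C1 := (n - 1).choose (k - 1) with hC1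
  set C2 := (n - 2).choose (k - 2) with hC2
  have hmn : m ≤ n := Finset.card_le_card hS
  -- identity 1 : n * C1 = k * N
  have hn1 : 1 ≤ n := hk1.trans hk2
  have id1 : n * C1 = k * N := by
    have h := Nat.add_one_mul_choose_eq (n - 1) (k - 1)
    rw [show n - 1 + 1 = n by omega, show k - 1 + 1 = k by omega] at h
    rw [hN, hC1, h, Nat.mul_comm]
  -- first moment
  have h1 : ∑ C ∈ A.powersetCard k, (S.filter (· ∈ C)).card = m * C1 := by
    simp_rw [Finset.card_filter]
    rw [Finset.sum_comm]
    have : ∀ a ∈ S, (∑ C ∈ A.powersetCard k, if a ∈ C then 1 else 0) = C1 := by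
      intro a ha
      rw [← Finset.card_filter]
      exact count_one (hS ha) hk1
    rw [Finset.sum_congr rfl this, Finset.sum_const, smul_eq_mul]
  -- second moment
  have h2 : ∑ C ∈ A.powersetCard k, ((S.filter (· ∈ C)).card) ^ 2
      = ∑ a ∈ S, ∑ b ∈ S, ((A.powersetCard k).filter (fun C => a ∈ C ∧ b ∈ C)).card := by
    have e : ∀ C : Finset G, ((S.filter (· ∈ C)).card) ^ 2
        = ∑ a ∈ S, ∑ b ∈ S, if a ∈ C ∧ b ∈ C then 1 else 0 := by
      intro C
      rw [sq, Finset.card_filter, Finset.sum_mul_sum]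
      refine Finset.sum_congr rfl fun a _ => Finset.sum_congr rfl fun b _ => ?_
      split_ifs with h1 h2 h3 <;> simp_all
    simp_rw [e]
    rw [Finset.sum_comm]
    refine Finset.sum_congr rfl fun a _ => ?_
    rw [Finset.sum_comm]
    refine Finset.sum_congr rfl fun b _ => ?_
    rw [← Finset.card_filter]
  -- diagonal split
  have h3 : ∑ a ∈ S, ∑ b ∈ S, ((A.powersetCard k).filter (fun C => a ∈ C ∧ b ∈ C)).card
      = m * C1 + ∑ a ∈ S, ∑ b ∈ S.erase a,
          ((A.powersetCard k).filter (fun C => a ∈ C ∧ b ∈ C)).card := by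
    have hdiag : ∀ a ∈ S, ∑ b ∈ S, ((A.powersetCard k).filter (fun C => a ∈ C ∧ b ∈ C)).card
        = C1 + ∑ b ∈ S.erase a, ((A.powersetCard k).filter (fun C => a ∈ C ∧ b ∈ C)).card := by
      intro a ha
      rw [← Finset.add_sum_erase S _ ha]
      congr 1
      have : ((A.powersetCard k).filter (fun C => a ∈ C ∧ a ∈ C))
          = ((A.powersetCard k).filter (fun C => a ∈ C)) := by
        apply Finset.filter_congr; intro C _; simp
      rw [this]
      exact count_one (hS ha) hk1
    rw [Finset.sum_congr rfl hdiag, Finset.sum_add_distrib, Finset.sum_const, smul_eq_mul]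
  set OFF := ∑ a ∈ S, ∑ b ∈ S.erase a,
      ((A.powersetCard k).filter (fun C => a ∈ C ∧ b ∈ C)).card with hOFF
  -- off-diagonal bound
  have hoff : n ^ 2 * OFF ≤ k ^ 2 * m ^ 2 * N := by
    rcases Nat.lt_or_ge k 2 with hk | hk
    · have hOFF0 : OFF = 0 := by
        rw [hOFF]
        apply Finset.sum_eq_zero
        intro a ha
        apply Finset.sum_eq_zero
        intro b hb
        rw [Finset.card_eq_zero, Finset.filter_eq_empty_iff]
        rintro C hC ⟨haC, hbC⟩
        have hsub : ({b, a} : Finset G) ⊆ C := by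
          intro x hx
          rcases Finset.mem_insert.1 hx with rfl | hx
          · exact hbC
          · exact (Finset.mem_singleton.1 hx) ▸ haC
        have hcard := Finset.card_le_card hsub
        rw [Finset.card_pair (Finset.mem_erase.1 hb).1] at hcard
        rw [mem_powersetCard] at hC
        omega
      rw [hOFF0]
      simp
    · have hn2 : 2 ≤ n := hk.trans hk2
      have heval : ∀ a ∈ S, (∑ b ∈ S.erase a,
          ((A.powersetCard k).filter (fun C => a ∈ C ∧ b ∈ C)).card) = (m - 1) * C2 := by
        intro a ha
        rw [Finset.sum_congr rfl (fun b hb =>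
          count_two (hS ha) (hS (Finset.mem_of_mem_erase hb))
            (Ne.symm (Finset.mem_erase.1 hb).1) hk),
          Finset.sum_const, smul_eq_mul, Finset.card_erase_of_mem ha]
      rw [hOFF, Finset.sum_congr rfl heval, Finset.sum_const, smul_eq_mul]
      rcases Nat.eq_zero_or_pos m with hm0 | hm1
      · simp [hm0]
      have id2 : (n - 1) * C2 = (k - 1) * C1 := by
        have h := Nat.add_one_mul_choose_eq (n - 2) (k - 2)
        rw [show n - 2 + 1 = n - 1 by omega, show k - 2 + 1 = k - 1 by omega] at h
        rw [hC2, hC1, h, Nat.mul_comm]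
      apply Nat.le_of_mul_le_mul_left _ (show 0 < n - 1 by omega)
      calc (n-1) * (n^2 * (m * ((m-1) * C2)))
          = n^2 * m * (m-1) * ((n-1) * C2) := by ring
        _ = n^2 * m * (m-1) * ((k-1) * C1) := by rw [id2]
        _ = n * m * (m-1) * (k-1) * (n * C1) := by ring
        _ = n * m * (m-1) * (k-1) * (k * N) := by rw [id1]
        _ = (n * ((m-1) * (k-1))) * (m * (k * N)) := by ring
        _ ≤ ((n-1) * (k * m)) * (m * (k * N)) :=
            Nat.mul_le_mul_right _ (natineq hm1 hk1 hmn hk2)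
        _ = (n-1) * (k^2 * m^2 * N) := by ring
  -- assemble over ℤ
  have e : (n : ℤ) * C1 = k * N := by exact_mod_cast id1
  have hoffZ : (n : ℤ)^2 * OFF ≤ k^2 * m^2 * N := by exact_mod_cast hoff
  have A1 : (∑ C ∈ A.powersetCard k, ((S.filter (· ∈ C)).card : ℤ)) = (m : ℤ) * C1 := by
    exact_mod_cast congrArg (Nat.cast (R := ℤ)) h1
  have A2 : (∑ C ∈ A.powersetCard k, ((S.filter (· ∈ C)).card : ℤ)^2)
      = (m : ℤ) * C1 + OFF := by
    exact_mod_cast congrArg (Nat.cast (R := ℤ)) (h2.trans h3)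
  calc ∑ C ∈ A.powersetCard k,
        ((n : ℤ) * ((S.filter (· ∈ C)).card : ℤ) - (k : ℤ) * (m : ℤ)) ^ 2
      = ∑ C ∈ A.powersetCard k, ((n:ℤ)^2 * ((S.filter (· ∈ C)).card : ℤ)^2
          - 2*(n:ℤ)*k*m*((S.filter (· ∈ C)).card : ℤ) + (k:ℤ)^2*m^2) :=
        Finset.sum_congr rfl fun C _ => by ring
    _ = (n:ℤ)^2 * (∑ C ∈ A.powersetCard k, ((S.filter (· ∈ C)).card : ℤ)^2)
          - 2*(n:ℤ)*k*m*(∑ C ∈ A.powersetCard k, ((S.filter (· ∈ C)).card : ℤ))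
          + (N:ℤ)*((k:ℤ)^2*m^2) := by
        rw [Finset.sum_add_distrib, Finset.sum_sub_distrib, ← Finset.mul_sum, ← Finset.mul_sum,
          Finset.sum_const, nsmul_eq_mul]
    _ = (n:ℤ)^2 * ((m : ℤ) * C1 + OFF) - 2*(n:ℤ)*k*m*((m : ℤ) * C1) + (N:ℤ)*((k:ℤ)^2*m^2) := by
        rw [A1, A2]
    _ ≤ (N : ℤ) * n * m * k := by
        have e1 : (n:ℤ)^2 * ((m:ℤ) * C1) = (n:ℤ)*m*k*N := by linear_combination ((n:ℤ)*m) * e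
        have e2 : 2*(n:ℤ)*k*m*((m:ℤ) * C1) = 2*(k:ℤ)^2*m^2*N := by
          linear_combination (2*(k:ℤ)*m*m) * e
        linarith [e1, e2, hoffZ]

end Aux

section AuxGroup
variable {G : Type*} [Group G] [DecidableEq G]

lemma conv_card (C B : Finset G) (x : G) :
    ((C ×ˢ B).filter (fun p => p.1 * p.2 = x)).card
      = (C.filter (fun a => a⁻¹ * x ∈ B)).card := by
  apply Finset.card_bij' (fun p _ => p.1) (fun a _ => (a, a⁻¹ * x))
  case left_inv =>
    rintro ⟨a, b⟩ hp
    simp only [mem_filter, Finset.mem_product] at hp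
    obtain ⟨⟨h1, h2⟩, h3⟩ := hp
    simp only [Prod.mk.injEq]
    refine ⟨trivial, ?_⟩
    rw [← h3]; group
  case right_inv => intro a _; rfl
  case hi =>
    intro p hp
    simp only [mem_filter, Finset.mem_product] at hp ⊢
    obtain ⟨⟨h1, h2⟩, h3⟩ := hp
    refine ⟨h1, ?_⟩
    have : p.1⁻¹ * x = p.2 := by rw [← h3]; group
    rwa [this]
  case hj =>
    intro a ha
    simp only [mem_filter] at ha ⊢
    exact ⟨Finset.mem_product.2 ⟨ha.1, ha.2⟩, by group⟩

lemma hfiber (A B : Finset G) :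
    ∑ x ∈ A * B, (A.filter (fun a => a⁻¹ * x ∈ B)).card = A.card * B.card := by
  calc ∑ x ∈ A * B, (A.filter (fun a => a⁻¹ * x ∈ B)).card
      = ∑ x ∈ A * B, ((A ×ˢ B).filter (fun p => p.1 * p.2 = x)).card :=
        Finset.sum_congr rfl fun x _ => (conv_card A B x).symm
    _ = (A ×ˢ B).card := (Finset.card_eq_sum_card_fiberwise (fun p hp =>
        Finset.mul_mem_mul (Finset.mem_product.1 hp).1 (Finset.mem_product.1 hp).2)).symm
    _ = A.card * B.card := Finset.card_product A B

end AuxGroup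

/-- For a uniformly random `k`-element subset `C ⊆ A`, with `μ_C = (|A|/k)·1_C`:
`E‖μ_C * 1_B - 1_A * 1_B‖₂² ≤ |A|²|B|/k`. -/
theorem stmt15 {G : Type*} [Group G] [DecidableEq G] (A B : Finset G) (hB : B.Nonempty)
    (k : ℕ) (hk1 : 1 ≤ k) (hk2 : k ≤ A.card) :
    (∑ C ∈ A.powersetCard k, ∑ x ∈ A * B,
          (((A.card : ℝ) / k) * (((C ×ˢ B).filter (fun p => p.1 * p.2 = x)).card : ℝ)
            - (((A ×ˢ B).filter (fun p => p.1 * p.2 = x)).card : ℝ)) ^ 2)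
        / ((A.powersetCard k).card : ℝ)
      ≤ (A.card : ℝ) ^ 2 * (B.card : ℝ) / k := by
  have hk0 : (k : ℝ) ≠ 0 := Nat.cast_ne_zero.2 (by omega)
  have hNpos : 0 < ((A.powersetCard k).card : ℝ) := by
    rw [Finset.card_powersetCard]
    exact_mod_cast Nat.choose_pos hk2
  rw [div_le_iff₀ hNpos, Finset.sum_comm]
  have hx : ∀ x ∈ A * B,
      (∑ C ∈ A.powersetCard k,
        (((A.card : ℝ) / k) * (((C ×ˢ B).filter (fun p => p.1 * p.2 = x)).card : ℝ)
          - (((A ×ˢ B).filter (fun p => p.1 * p.2 = x)).card : ℝ)) ^ 2)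
      ≤ ((A.powersetCard k).card : ℝ) * A.card
          * ((A.filter (fun a => a⁻¹ * x ∈ B)).card : ℝ) / k := by
    intro x _
    set S := A.filter (fun a => a⁻¹ * x ∈ B) with hSdef
    have hSA : S ⊆ A := Finset.filter_subset _ _
    have hm : ((A ×ˢ B).filter (fun p => p.1 * p.2 = x)).card = S.card := conv_card A B x
    have hf : ∀ C ∈ A.powersetCard k,
        ((C ×ˢ B).filter (fun p => p.1 * p.2 = x)).card = (S.filter (· ∈ C)).card := by
      intro C hC
      have hCA := (Finset.mem_powersetCard.1 hC).1
      rw [conv_card]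
      congr 1
      ext a
      simp only [Finset.mem_filter, hSdef]
      constructor
      · rintro ⟨haC, hB'⟩
        exact ⟨⟨hCA haC, hB'⟩, haC⟩
      · rintro ⟨⟨_, hB'⟩, haC⟩
        exact ⟨haC, hB'⟩
    have keyR : ∑ C ∈ A.powersetCard k,
        ((A.card : ℝ) * ((S.filter (· ∈ C)).card : ℝ) - (k : ℝ) * (S.card : ℝ)) ^ 2
        ≤ ((A.powersetCard k).card : ℝ) * A.card * S.card * k := by
      exact_mod_cast key A S hSA hk1 hk2
    calc ∑ C ∈ A.powersetCard k,
          (((A.card : ℝ) / k) * (((C ×ˢ B).filter (fun p => p.1 * p.2 = x)).card : ℝ)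
            - (((A ×ˢ B).filter (fun p => p.1 * p.2 = x)).card : ℝ)) ^ 2
        = ∑ C ∈ A.powersetCard k,
            ((A.card : ℝ) * ((S.filter (· ∈ C)).card : ℝ) - (k : ℝ) * (S.card : ℝ)) ^ 2 / k ^ 2 := by
          refine Finset.sum_congr rfl fun C hC => ?_
          rw [hf C hC, hm]
          field_simp
      _ = (∑ C ∈ A.powersetCard k,
            ((A.card : ℝ) * ((S.filter (· ∈ C)).card : ℝ) - (k : ℝ) * (S.card : ℝ)) ^ 2) / k ^ 2 := by
          rw [Finset.sum_div]
      _ ≤ (((A.powersetCard k).card : ℝ) * A.card * S.card * k) / k ^ 2 := by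
          gcongr
      _ = ((A.powersetCard k).card : ℝ) * A.card * (S.card : ℝ) / k := by
          field_simp
  calc ∑ x ∈ A * B, ∑ C ∈ A.powersetCard k,
        (((A.card : ℝ) / k) * (((C ×ˢ B).filter (fun p => p.1 * p.2 = x)).card : ℝ)
          - (((A ×ˢ B).filter (fun p => p.1 * p.2 = x)).card : ℝ)) ^ 2
      ≤ ∑ x ∈ A * B, ((A.powersetCard k).card : ℝ) * A.card
          * ((A.filter (fun a => a⁻¹ * x ∈ B)).card : ℝ) / k := Finset.sum_le_sum hx
    _ = ((A.powersetCard k).card : ℝ) * A.card / k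
          * ∑ x ∈ A * B, ((A.filter (fun a => a⁻¹ * x ∈ B)).card : ℝ) := by
        rw [Finset.mul_sum]
        refine Finset.sum_congr rfl fun x _ => ?_
        ring
    _ = (A.card : ℝ) ^ 2 * B.card / k * (A.powersetCard k).card := by
        have : (∑ x ∈ A * B, ((A.filter (fun a => a⁻¹ * x ∈ B)).card : ℝ))
            = (A.card : ℝ) * B.card := by
          exact_mod_cast congrArg (Nat.cast (R := ℝ)) (hfiber A B)
        rw [this]
        field_simp
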